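/- For R, R_c ∈ SO(3), let e_R = (1/2)(R_c^T R - R^T R_c)^∨ and E(R, R_c) = (1/2)(tr(R^T R_c) I - R^T R_c). Then ‖E(R,R_c) v‖ ≤ ‖v‖ for all v ∈ R^3; in particular the operator norm of E(R, R_c) is at most 1. -/

import Mathlib

open Matrix BigOperators

noncomputable def enorm (x : Fin 3 → ℝ) : ℝ := Real.sqrt (∑ i, (x i)^2)


lemma frob_nonneg (A : Matrix (Fin 3) (Fin 3) ℝ) : 0 ≤ (A * Aᵀ).trace := by
  rw [Matrix.trace]
  refine Finset.sum_nonneg fun i _ => ?_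
  rw [Matrix.diag_apply, Matrix.mul_apply]
  exact Finset.sum_nonneg fun j _ => by simp [Matrix.transpose_apply, mul_self_nonneg]

lemma adj_poly (A : Matrix (Fin 3) (Fin 3) ℝ) :
    A.adjugate = A*A - A.trace • A + ((A.trace^2 - (A*A).trace)/2) • 1 := by
  ext i j
  simp [Matrix.adjugate_fin_three, Matrix.mul_apply, Matrix.trace, Fin.sum_univ_three,
    Matrix.one_apply]
  fin_cases i <;> fin_cases j <;> simp <;> ring

lemma dotmv (A : Matrix (Fin 3) (Fin 3) ℝ) (x y : Fin 3 → ℝ) :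
    x ⬝ᵥ (A *ᵥ y) = (Aᵀ *ᵥ x) ⬝ᵥ y := by
  rw [Matrix.dotProduct_mulVec, Matrix.mulVec_transpose]

set_option maxHeartbeats 1600000 in
/-- for `R, R_c ∈ SO(3)` and
`E(R,R_c) = (1/2)(tr(Rᵀ R_c) I - Rᵀ R_c)`, one has `‖E v‖ ≤ ‖v‖` for all `v`. -/
theorem stmt18 (R Rc : Matrix (Fin 3) (Fin 3) ℝ)
    (hR : Rᵀ * R = 1) (hdetR : R.det = 1)
    (hRc : Rcᵀ * Rc = 1) (hdetRc : Rc.det = 1)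
    (E : Matrix (Fin 3) (Fin 3) ℝ)
    (hE : E = (1/2 : ℝ) • ((Rᵀ * Rc).trace • (1 : Matrix (Fin 3) (Fin 3) ℝ) - Rᵀ * Rc)) :
    ∀ v : Fin 3 → ℝ, _root_.enorm (E *ᵥ v) ≤ _root_.enorm v := by
  intro v
  set Q : Matrix (Fin 3) (Fin 3) ℝ := Rᵀ * Rc with hQdef
  have hR' : R * Rᵀ = 1 := mul_eq_one_comm.mp hR
  have hQ1 : Qᵀ * Q = 1 := by
    rw [hQdef, Matrix.transpose_mul, Matrix.transpose_transpose]
    calc Rcᵀ * R * (Rᵀ * Rc) = Rcᵀ * (R * Rᵀ) * Rc := by rw [Matrix.mul_assoc, Matrix.mul_assoc, Matrix.mul_assoc]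
    _ = 1 := by rw [hR', Matrix.mul_one, hRc]
  have hQ2 : Q * Qᵀ = 1 := mul_eq_one_comm.mp hQ1
  have hdet : Q.det = 1 := by
    rw [hQdef, Matrix.det_mul, Matrix.det_transpose, hdetR, hdetRc, mul_one]
  have hadj : Q.adjugate = Qᵀ := by
    have h1 : Q * Q.adjugate = 1 := by rw [Matrix.mul_adjugate, hdet, one_smul]
    calc Q.adjugate = (Qᵀ * Q) * Q.adjugate := by rw [hQ1, Matrix.one_mul]
      _ = Qᵀ * (Q * Q.adjugate) := by rw [Matrix.mul_assoc]
      _ = Qᵀ := by rw [h1, Matrix.mul_one]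
  set t : ℝ := Q.trace with htdef
  have htr2 : (Q*Q).trace = t^2 - 2*t := by
    have h := adj_poly Q
    rw [hadj] at h
    have h2 := congrArg Matrix.trace h
    simp only [Matrix.trace_add, Matrix.trace_sub, Matrix.trace_smul, Matrix.trace_transpose,
      Matrix.trace_one, smul_eq_mul] at h2
    simp only [← htdef] at h2
    norm_num at h2
    linarith
  have hKey : Qᵀ = Q*Q - t • Q + t • 1 := by
    have hc : ((Q.trace)^2 - (Q*Q).trace)/2 = t := by rw [htr2, ← htdef]; ring
    rw [← hadj, adj_poly Q, hc, ← htdef]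
  have hKeyT : Q = Qᵀ * Qᵀ - t • Qᵀ + t • 1 := by
    have h := congrArg Matrix.transpose hKey
    simpa [Matrix.transpose_add, Matrix.transpose_sub, Matrix.transpose_smul,
      Matrix.transpose_mul, Matrix.transpose_one] using h
  set N : Matrix (Fin 3) (Fin 3) ℝ := Q + Qᵀ + (1-t) • 1 with hNdef
  have hNsymm : Nᵀ = N := by
    rw [hNdef]
    simp [Matrix.transpose_add, Matrix.transpose_smul, Matrix.transpose_one]
    abel
  have e1 : Q * Q = Qᵀ + t • Q - t • 1 := by rw [hKey]; abel
  have e2 : Qᵀ * Qᵀ = Q + t • Qᵀ - t • 1 := by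
    have h := congrArg Matrix.transpose e1
    simpa [Matrix.transpose_add, Matrix.transpose_sub, Matrix.transpose_smul,
      Matrix.transpose_mul, Matrix.transpose_one] using h
  have hNN : N * N = (3-t) • N := by
    rw [hNdef]
    simp only [Matrix.add_mul, Matrix.mul_add, Matrix.smul_mul, Matrix.mul_smul,
      Matrix.one_mul, Matrix.mul_one, hQ1, hQ2, e1, e2, smul_add, smul_smul, smul_sub]
    module
  -- scalar quantities
  set s : ℝ := v ⬝ᵥ v with hsdef
  set a : ℝ := v ⬝ᵥ (Q *ᵥ v) with hadef
  set b : ℝ := v ⬝ᵥ (N *ᵥ v) with hbdef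
  have hs : 0 ≤ s := Finset.sum_nonneg fun i _ => mul_self_nonneg _
  have hQvQv : (Q *ᵥ v) ⬝ᵥ (Q *ᵥ v) = s := by
    rw [dotmv Q (Q *ᵥ v) v, Matrix.mulVec_mulVec, hQ1, Matrix.one_mulVec]
  have hQTv : v ⬝ᵥ (Qᵀ *ᵥ v) = a := by
    rw [dotmv, Matrix.transpose_transpose, hadef, dotProduct_comm]
  have ha_le : a ≤ s := by
    have h : 0 ≤ ((1 - Q) *ᵥ v) ⬝ᵥ ((1 - Q) *ᵥ v) :=
      Finset.sum_nonneg fun i _ => mul_self_nonneg _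
    rw [Matrix.sub_mulVec, Matrix.one_mulVec, dotProduct_sub, sub_dotProduct,
      sub_dotProduct, dotProduct_comm (Q *ᵥ v) v, hQvQv, ← hsdef, ← hadef] at h
    linarith
  have ht3 : t ≤ 3 := by
    have hexp : (1 - Q) * (1 - Q)ᵀ = 1 - Qᵀ - Q + 1 := by
      rw [Matrix.transpose_sub, Matrix.transpose_one, Matrix.mul_sub, Matrix.sub_mul,
        Matrix.sub_mul, hQ2, Matrix.one_mul, Matrix.mul_one]
      simp only [Matrix.one_mul]
      abel
    have h := frob_nonneg (1 - Q)
    rw [hexp] at h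
    simp only [Matrix.trace_add, Matrix.trace_sub, Matrix.trace_one, Matrix.trace_transpose,
      ← htdef] at h
    norm_num at h
    linarith
  have hD : 0 ≤ (3 - t) * (1 + t) := by
    have h := frob_nonneg (1 - Q * Q)
    have hQQT : (Q * Q) * (Q * Q)ᵀ = 1 := by
      rw [Matrix.transpose_mul, Matrix.mul_assoc, ← Matrix.mul_assoc Q Qᵀ Qᵀ, hQ2,
        Matrix.one_mul, hQ2]
    have hexp : (1 - Q * Q) * (1 - Q * Q)ᵀ = 1 - (Q * Q)ᵀ - Q * Q + 1 := by
      rw [Matrix.transpose_sub, Matrix.transpose_one, Matrix.mul_sub, Matrix.sub_mul,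
        Matrix.sub_mul, hQQT, Matrix.one_mul, Matrix.mul_one]
      simp only [Matrix.one_mul]
      abel
    rw [hexp] at h
    simp only [Matrix.trace_add, Matrix.trace_sub, Matrix.trace_one, Matrix.trace_transpose,
      htr2] at h
    norm_num at h
    nlinarith
  have hbval : b = 2 * a + (1 - t) * s := by
    rw [hbdef, hNdef, Matrix.add_mulVec, Matrix.add_mulVec, dotProduct_add,
      dotProduct_add, Matrix.smul_mulVec, Matrix.one_mulVec,
      dotProduct_smul, hQTv, ← hadef, smul_eq_mul, ← hsdef]
    ring
  have hc : (N *ᵥ v) ⬝ᵥ (N *ᵥ v) = (3 - t) * b := by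
    rw [dotmv N (N *ᵥ v) v, hNsymm, Matrix.mulVec_mulVec, hNN, Matrix.smul_mulVec,
      smul_dotProduct, smul_eq_mul, dotProduct_comm, ← hbdef]
  have hc0 : 0 ≤ (3 - t) * b := by
    rw [← hc]; exact Finset.sum_nonneg fun i _ => mul_self_nonneg _
  have hCS : b ^ 2 ≤ s * ((3 - t) * b) := by
    rw [← hc]
    have h := Finset.sum_mul_sq_le_sq_mul_sq Finset.univ v (N *ᵥ v)
    calc b ^ 2 = (∑ i, v i * (N *ᵥ v) i) ^ 2 := by rw [hbdef]; rfl
      _ ≤ (∑ i, v i ^ 2) * ∑ i, (N *ᵥ v) i ^ 2 := h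
      _ = s * ((N *ᵥ v) ⬝ᵥ (N *ᵥ v)) := by
          rw [hsdef]; simp [dotProduct, sq]
  have hb0 : 0 ≤ b := by
    rcases lt_or_eq_of_le ht3 with h3 | h3
    · by_contra hb
      push_neg at hb
      nlinarith
    · have hCS' : b ^ 2 ≤ 0 := by rw [← h3] at hCS; nlinarith [hCS]
      nlinarith [sq_nonneg b]
  -- the quadratic form of E
  have hEv : E *ᵥ v = (1/2 : ℝ) • (t • v - Q *ᵥ v) := by
    rw [hE, Matrix.smul_mulVec, Matrix.sub_mulVec, Matrix.smul_mulVec,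
      Matrix.one_mulVec]
  have hEE : (E *ᵥ v) ⬝ᵥ (E *ᵥ v) = (1/4) * (t^2 * s - 2 * t * a + s) := by
    rw [hEv, smul_dotProduct, dotProduct_smul, dotProduct_sub,
      sub_dotProduct, sub_dotProduct, smul_dotProduct,
      dotProduct_smul, dotProduct_smul, smul_dotProduct,
      dotProduct_comm (Q *ᵥ v) v, hQvQv, ← hsdef, ← hadef]
    simp only [smul_eq_mul]
    ring
  -- main inequality
  have hmain : (E *ᵥ v) ⬝ᵥ (E *ᵥ v) ≤ s := by
    rw [hEE]
    rcases le_or_gt 0 t with ht | ht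
    · nlinarith [mul_nonneg ht hb0, mul_nonneg (sub_nonneg.2 ht3) hs]
    · nlinarith [mul_nonneg (le_of_lt (neg_pos.2 ht)) (sub_nonneg.2 ha_le),
        mul_nonneg hD hs]
  -- conclude
  unfold _root_.enorm
  apply Real.sqrt_le_sqrt
  have h1 : ∑ i, (E *ᵥ v) i ^ 2 = (E *ᵥ v) ⬝ᵥ (E *ᵥ v) := by
    simp [dotProduct, sq]
  have h2 : ∑ i, (v i) ^ 2 = s := by rw [hsdef]; simp [dotProduct, sq]
  rw [h1, h2]
  exact hmain
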